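/- Let S be an inverse semigroup with zero. Then S is quasi-fundamental if and only if whenever s, t are non-zero elements of S such that s e s* = t e t* for every idempotent e of S, there exists a non-zero element u with u ≤ s and u ≤ t in the natural partial order. -/
import Mathlib


/-- An inverse semigroup with zero: a semigroup with an absorbing zero in which every
element `s` has a unique generalized inverse `star s`. -/
class InverseSemigroup0 (S : Type*) extends Semigroup S, Zero S, Star S where
  zero_mul : ∀ s : S, 0 * s = 0
  mul_zero : ∀ s : S, s * 0 = 0
  mul_star_mul_self : ∀ s : S, s * star s * s = s
  star_mul_self_star : ∀ s : S, star s * s * star s = star s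
  star_unique : ∀ s t : S, s * t * s = s → t * s * t = t → t = star s

/-- The natural partial order on an inverse semigroup: `a ≤ b` iff `a = b * a* * a`. -/
def NatLe {S : Type*} [InverseSemigroup0 S] (a b : S) : Prop := a = b * star a * a

/-- `S` is quasi-fundamental if every non-zero element of the centralizer of the
idempotents lies above some non-zero idempotent in the natural partial order. -/
def QuasiFundamental (S : Type*) [InverseSemigroup0 S] : Prop :=
  ∀ s : S, s ≠ 0 → (∀ e : S, IsIdempotentElem e → s * e = e * s) →
    ∃ e : S, e ≠ 0 ∧ IsIdempotentElem e ∧ NatLe e s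

section Aux

variable {S : Type*} [InverseSemigroup0 S]

private lemma A1 (s : S) : s * star s * s = s := InverseSemigroup0.mul_star_mul_self s

private lemma A2 (s : S) : star s * s * star s = star s := InverseSemigroup0.star_mul_self_star s

private lemma uniq {s t : S} (h1 : s * t * s = s) (h2 : t * s * t = t) : t = star s :=
  InverseSemigroup0.star_unique s t h1 h2

private lemma isg_star_star (s : S) : star (star s) = s :=
  (uniq (A2 s) (A1 s)).symm

private lemma idem_star {e : S} (he : IsIdempotentElem e) : star e = e :=
  (uniq (by rw [he.eq, he.eq]) (by rw [he.eq, he.eq])).symm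

private lemma hd {e : S} (he : IsIdempotentElem e) (x : S) : e * (e * x) = e * x := by
  rw [← mul_assoc, he.eq]

private lemma idem_ss (s : S) : IsIdempotentElem (star s * s) := by
  show (star s * s) * (star s * s) = star s * s
  calc (star s * s) * (star s * s) = star s * (s * star s * s) := by simp only [mul_assoc]
    _ = star s * s := by rw [A1]

private lemma idem_ss' (s : S) : IsIdempotentElem (s * star s) := by
  show (s * star s) * (s * star s) = s * star s
  calc (s * star s) * (s * star s) = s * (star s * s * star s) := by simp only [mul_assoc]
    _ = s * star s := by rw [A2]

private lemma A1r (s x : S) : s * (star s * (s * x)) = s * x := by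
  calc s * (star s * (s * x)) = (s * star s * s) * x := by simp only [mul_assoc]
    _ = s * x := by rw [A1]

private lemma A2r (s x : S) : star s * (s * (star s * x)) = star s * x := by
  calc star s * (s * (star s * x)) = (star s * s * star s) * x := by simp only [mul_assoc]
    _ = star s * x := by rw [A2]

private lemma idem_mul {e f : S} (he : IsIdempotentElem e) (hf : IsIdempotentElem f) :
    IsIdempotentElem (e * f) := by
  set x := star (e * f) with hx
  have hxe : (e * f) * x * (e * f) = e * f := A1 (e * f)
  have hxs : x * (e * f) * x = x := A2 (e * f)
  have hxe' : e * (f * (x * (e * f))) = e * f := by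
    simp only [mul_assoc] at hxe; exact hxe
  have hxs' : x * (e * (f * x)) = x := by
    simp only [mul_assoc] at hxs; exact hxs
  have h1 : (e * f) * (f * x * e) * (e * f) = e * f := by
    calc (e * f) * (f * x * e) * (e * f)
        = e * (f * (f * (x * (e * (e * f))))) := by simp only [mul_assoc]
      _ = e * (f * (x * (e * f))) := by rw [hd hf, hd he]
      _ = e * f := hxe'
  have h2 : (f * x * e) * (e * f) * (f * x * e) = f * x * e := by
    calc (f * x * e) * (e * f) * (f * x * e)
        = f * (x * (e * (e * (f * (f * (x * e)))))) := by simp only [mul_assoc]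
      _ = f * (x * (e * (f * (x * e)))) := by rw [hd he, hd hf]
      _ = f * ((x * (e * (f * x))) * e) := by simp only [mul_assoc]
      _ = f * (x * e) := by rw [hxs']
      _ = f * x * e := by rw [mul_assoc]
  have hfxe : f * x * e = x := (uniq h1 h2).trans hx.symm
  have hxx : IsIdempotentElem x := by
    show x * x = x
    conv_lhs => rw [← hfxe]
    calc (f * x * e) * (f * x * e)
        = f * ((x * (e * (f * x))) * e) := by simp only [mul_assoc]
      _ = f * (x * e) := by rw [hxs']
      _ = f * x * e := by rw [mul_assoc]
      _ = x := hfxe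
  have hef : e * f = x := by
    rw [← isg_star_star (e * f), ← hx, idem_star hxx]
  exact hef ▸ hxx

private lemma idem_comm {e f : S} (he : IsIdempotentElem e) (hf : IsIdempotentElem f) :
    e * f = f * e := by
  have hef := idem_mul he hf
  have hfe := idem_mul hf he
  have h1 : (e * f) * (f * e) * (e * f) = e * f := by
    calc (e * f) * (f * e) * (e * f)
        = e * (f * (f * (e * (e * f)))) := by simp only [mul_assoc]
      _ = e * (f * (e * f)) := by rw [hd hf, hd he]
      _ = (e * f) * (e * f) := by simp only [mul_assoc]
      _ = e * f := hef.eq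
  have h2 : (f * e) * (e * f) * (f * e) = f * e := by
    calc (f * e) * (e * f) * (f * e)
        = f * (e * (e * (f * (f * e)))) := by simp only [mul_assoc]
      _ = f * (e * (f * e)) := by rw [hd he, hd hf]
      _ = (f * e) * (f * e) := by simp only [mul_assoc]
      _ = f * e := hfe.eq
  have h := uniq h1 h2
  rw [h, idem_star hef]

private lemma isg_star_mul (a b : S) : star (a * b) = star b * star a := by
  have h1 : (a * b) * (star b * star a) * (a * b) = a * b := by
    have hc : (b * star b) * (star a * a) = (star a * a) * (b * star b) :=
      idem_comm (idem_ss' b) (idem_ss a)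
    calc (a * b) * (star b * star a) * (a * b)
        = a * ((b * star b) * (star a * a)) * b := by simp only [mul_assoc]
      _ = a * ((star a * a) * (b * star b)) * b := by rw [hc]
      _ = (a * star a * a) * (b * star b * b) := by simp only [mul_assoc]
      _ = a * b := by rw [A1, A1]
  have h2 : (star b * star a) * (a * b) * (star b * star a) = star b * star a := by
    have hc : (star a * a) * (b * star b) = (b * star b) * (star a * a) :=
      idem_comm (idem_ss a) (idem_ss' b)
    calc (star b * star a) * (a * b) * (star b * star a)
        = star b * ((star a * a) * (b * star b)) * star a := by simp only [mul_assoc]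
      _ = star b * ((b * star b) * (star a * a)) * star a := by rw [hc]
      _ = (star b * b * star b) * (star a * a * star a) := by simp only [mul_assoc]
      _ = star b * star a := by rw [A2, A2]
  exact (uniq h1 h2).symm

end Aux

/-- An inverse semigroup with zero is quasi-fundamental iff any two non-zero elements
`s, t` with `s e s* = t e t*` for all idempotents `e` have a common non-zero lower
bound in the natural partial order. -/
theorem stmt0 (S : Type*) [InverseSemigroup0 S] :
    QuasiFundamental S ↔
      ∀ s t : S, s ≠ 0 → t ≠ 0 →
        (∀ e : S, IsIdempotentElem e → s * e * star s = t * e * star t) →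
        ∃ u : S, u ≠ 0 ∧ NatLe u s ∧ NatLe u t := by
  constructor
  · -- forward direction
    intro hQF s t hs ht h
    -- From e = s* s : s s* = t (s* s) t*
    have hsss := h _ (idem_ss s)
    have hA : s * star s = t * (star s * s) * star t := by
      have hred : s * (star s * s) * star s = s * star s := by
        calc s * (star s * s) * star s = (s * star s * s) * star s := by simp only [mul_assoc]
          _ = s * star s := by rw [A1]
      rw [← hred, hsss]
    -- (t t*)(s s*) = s s*
    have h1 : (t * star t) * (s * star s) = s * star s := by
      rw [hA]
      calc (t * star t) * (t * (star s * s) * star t)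
          = t * (star t * (t * ((star s * s) * star t))) := by simp only [mul_assoc]
        _ = t * ((star s * s) * star t) := A1r t _
        _ = t * (star s * s) * star t := by simp only [mul_assoc]
    have hT : t * star t * s = s := by
      conv_lhs => rw [← A1 s]
      calc t * star t * (s * star s * s)
          = ((t * star t) * (s * star s)) * s := by simp only [mul_assoc]
        _ = (s * star s) * s := by rw [h1]
        _ = s := A1 s
    -- z = t* s is non-zero and central
    have hz0 : star t * s ≠ 0 := by
      intro h0
      apply hs
      rw [← hT, mul_assoc, h0, InverseSemigroup0.mul_zero]
    have hzc : ∀ e : S, IsIdempotentElem e → (star t * s) * e = e * (star t * s) := by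
      intro e he
      have hc := idem_comm he (idem_ss s)
      have hse : s * e = s * e * star s * s := by
        calc s * e = (s * star s * s) * e := by rw [A1]
          _ = s * ((star s * s) * e) := by simp only [mul_assoc]
          _ = s * (e * (star s * s)) := by rw [← hc]
          _ = s * e * star s * s := by simp only [mul_assoc]
      calc (star t * s) * e
          = star t * (s * e) := by rw [mul_assoc]
        _ = star t * (s * e * star s * s) := by rw [← hse]
        _ = star t * ((s * e * star s) * s) := by rw [mul_assoc]
        _ = star t * ((t * e * star t) * s) := by rw [h e he]
        _ = ((star t * t) * e) * (star t * s) := by simp only [mul_assoc]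
        _ = (e * (star t * t)) * (star t * s) := by rw [idem_comm (idem_ss t) he]
        _ = e * (star t * (t * (star t * s))) := by simp only [mul_assoc]
        _ = e * (star t * s) := by rw [A2r]
    obtain ⟨f, hf0, hfi, hfle⟩ := hQF (star t * s) hz0 hzc
    have hsf : star f = f := idem_star hfi
    have hfe : f = (star t * s) * star f * f := hfle
    have hf' : f = (star t * s) * f := by
      conv_lhs => rw [hfe]
      rw [hsf, mul_assoc, hfi.eq]
    have hkey : f = star t * (s * f) := by
      rw [← mul_assoc, ← hf']
    have hu0 : s * f ≠ 0 := by
      intro h0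
      apply hf0
      rw [hkey, h0, InverseSemigroup0.mul_zero]
    have hcf := idem_comm hfi (idem_ss s)
    have key1 : s * (f * star s) * (s * f) = s * f := by
      calc s * (f * star s) * (s * f)
          = s * (f * ((star s * s) * f)) := by simp only [mul_assoc]
        _ = s * (f * (f * (star s * s))) := by rw [← hcf]
        _ = s * (f * (star s * s)) := by rw [hd hfi]
        _ = s * ((star s * s) * f) := by rw [hcf]
        _ = (s * star s * s) * f := by simp only [mul_assoc]
        _ = s * f := by rw [A1]
    have htf : t * f = s * f := by
      conv_lhs => rw [hkey]
      calc t * (star t * (s * f))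
          = (t * star t * s) * f := by simp only [mul_assoc]
        _ = s * f := by rw [hT]
    refine ⟨s * f, hu0, ?_, ?_⟩
    · show s * f = s * star (s * f) * (s * f)
      rw [isg_star_mul s f, hsf]
      exact key1.symm
    · show s * f = t * star (s * f) * (s * f)
      rw [isg_star_mul s f, hsf]
      refine Eq.symm ?_
      calc t * (f * star s) * (s * f)
          = (t * f) * (star s * (s * f)) := by simp only [mul_assoc]
        _ = (s * f) * (star s * (s * f)) := by rw [htf]
        _ = s * (f * star s) * (s * f) := by simp only [mul_assoc]
        _ = s * f := key1
  · -- reverse direction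
    intro H z hz hzc
    have hz1 : z * star z ≠ 0 := by
      intro h0
      apply hz
      rw [← A1 z, h0, InverseSemigroup0.zero_mul]
    have hcond : ∀ e : S, IsIdempotentElem e →
        z * e * star z = (z * star z) * e * star (z * star z) := by
      intro e he
      rw [idem_star (idem_ss' z)]
      have hc := idem_comm he (idem_ss' z)
      refine Eq.symm ?_
      calc (z * star z) * e * (z * star z)
          = (z * star z) * (e * (z * star z)) := by rw [mul_assoc]
        _ = (z * star z) * ((z * star z) * e) := by rw [hc]
        _ = (z * star z) * e := hd (idem_ss' z) e
        _ = e * (z * star z) := hc.symm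
        _ = (e * z) * star z := by rw [← mul_assoc]
        _ = (z * e) * star z := by rw [← hzc e he]
    obtain ⟨u, hu0, hu1, hu2⟩ := H z (z * star z) hz hz1 hcond
    have hu2' : u = (z * star z) * (star u * u) := by
      rw [← mul_assoc]
      exact hu2
    have hui : IsIdempotentElem u := by
      show u * u = u
      conv_lhs => rw [hu2']
      have hc := idem_comm (idem_ss u) (idem_ss' z)
      calc ((z * star z) * (star u * u)) * ((z * star z) * (star u * u))
          = (z * star z) * (((star u * u) * (z * star z)) * (star u * u)) := by
            simp only [mul_assoc]
        _ = (z * star z) * (((z * star z) * (star u * u)) * (star u * u)) := by rw [hc]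
        _ = ((z * star z) * (z * star z)) * ((star u * u) * (star u * u)) := by
            simp only [mul_assoc]
        _ = (z * star z) * (star u * u) := by rw [(idem_ss' z).eq, (idem_ss u).eq]
        _ = u := hu2'.symm
    exact ⟨u, hu0, hui, hu1⟩
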